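/- Let M₁, M₂ be incidence matrices of symmetric (v,k₁,λ₁) and (v,k₂,λ₂) designs with M₁M₂ᵀ + M₂M₁ᵀ = α(J − I), where α = 2k₁k₂/(v−1). Set Q = M₁M₂ᵀ + I. Then QQᵀ = σI + τJ with σ = (k₁−λ₁)(k₂−λ₂) − α + 1 and τ = vλ₁λ₂ + λ₂(k₁−λ₁) + λ₁(k₂−λ₂) + α, and moreover σ + vτ = (k₁k₂ + 1)². -/
import Mathlib


open Matrix

/- `IsDesign v k l N`: `N` is the incidence matrix of a symmetric `(v,k,l)` design,
with constant row and column sums `k`. -/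
def IsDesign (v k l : ℕ) (N : Matrix (Fin v) (Fin v) ℤ) : Prop :=
  (∀ i j, N i j = 0 ∨ N i j = 1) ∧
  Nᵀ * N = ((k : ℤ) - (l : ℤ)) • 1 + (l : ℤ) • Matrix.of (fun _ _ => (1 : ℤ)) ∧
  N * Nᵀ = ((k : ℤ) - (l : ℤ)) • 1 + (l : ℤ) • Matrix.of (fun _ _ => (1 : ℤ)) ∧
  k * (k - 1) = (v - 1) * l ∧
  (∀ i, ∑ j, N i j = (k : ℤ)) ∧ (∀ j, ∑ i, N i j = (k : ℤ))

lemma design_eq_int (v k l : ℕ) (hv : 2 ≤ v) (h : k * (k - 1) = (v - 1) * l) :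
    (k : ℤ) * ((k : ℤ) - 1) = ((v : ℤ) - 1) * l := by
  rcases Nat.eq_zero_or_pos k with hk | hk
  · subst hk
    have hl : l = 0 := by
      have : (v - 1) * l = 0 := by omega
      have hv1 : v - 1 ≠ 0 := by omega
      exact (Nat.mul_eq_zero.mp this).resolve_left hv1
    subst hl; simp
  · have h' := congrArg (Nat.cast : ℕ → ℤ) h
    push_cast [Nat.cast_sub hk, Nat.cast_sub (show 1 ≤ v by omega)] at h'
    linarith

theorem design_decomposition_Q (v k1 k2 l1 l2 : ℕ) (hv : 2 ≤ v)
    (M1 M2 : Matrix (Fin v) (Fin v) ℤ)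
    (hM1 : IsDesign v k1 l1 M1) (hM2 : IsDesign v k2 l2 M2)
    (α : ℤ) (hα : α * ((v : ℤ) - 1) = 2 * (k1 : ℤ) * (k2 : ℤ))
    (hcross : M1 * M2ᵀ + M2 * M1ᵀ = α • (Matrix.of (fun _ _ => (1 : ℤ)) - 1)) :
    (M1 * M2ᵀ + 1) * (M1 * M2ᵀ + 1)ᵀ =
        (((k1 : ℤ) - l1) * ((k2 : ℤ) - l2) - α + 1) • 1 +
        ((v : ℤ) * l1 * l2 + (l2 : ℤ) * ((k1 : ℤ) - l1) + (l1 : ℤ) * ((k2 : ℤ) - l2) + α) •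
          Matrix.of (fun _ _ => (1 : ℤ)) ∧
    (((k1 : ℤ) - l1) * ((k2 : ℤ) - l2) - α + 1) +
        (v : ℤ) * ((v : ℤ) * l1 * l2 + (l2 : ℤ) * ((k1 : ℤ) - l1) + (l1 : ℤ) * ((k2 : ℤ) - l2) + α)
      = ((k1 : ℤ) * (k2 : ℤ) + 1) ^ 2 := by
  set J : Matrix (Fin v) (Fin v) ℤ := Matrix.of (fun _ _ => (1 : ℤ)) with hJdef
  obtain ⟨h01₁, hTtN1, hNNt1, hnum1, hrow1, hcol1⟩ := hM1
  obtain ⟨h01₂, hTtN2, hNNt2, hnum2, hrow2, hcol2⟩ := hM2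
  have e1 := design_eq_int v k1 l1 hv hnum1
  have e2 := design_eq_int v k2 l2 hv hnum2
  have hM1J : M1 * J = (k1 : ℤ) • J := by
    ext i j
    simp [Matrix.mul_apply, hJdef, hrow1 i]
  have hJM1t : J * M1ᵀ = (k1 : ℤ) • J := by
    ext i j
    simp [Matrix.mul_apply, hJdef, Matrix.transpose_apply, hrow1 j]
  have hQt : (M1 * M2ᵀ + 1)ᵀ = M2 * M1ᵀ + 1 := by
    simp [Matrix.transpose_add, Matrix.transpose_mul]
  have expand : (M1 * M2ᵀ + 1) * (M2 * M1ᵀ + 1)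
      = M1 * (M2ᵀ * M2) * M1ᵀ + (M1 * M2ᵀ + M2 * M1ᵀ) + 1 := by
    noncomm_ring
  have hmid : M1 * (M2ᵀ * M2) * M1ᵀ
      = (((k1 : ℤ) - l1) * ((k2 : ℤ) - l2)) • 1
        + (((k2 : ℤ) - l2) * l1 + (l2 : ℤ) * k1 * k1) • J := by
    rw [hTtN2]
    rw [Matrix.mul_add, Matrix.add_mul, Matrix.mul_smul, Matrix.mul_one,
      Matrix.smul_mul, Matrix.mul_smul, Matrix.smul_mul, hNNt1]
    rw [show M1 * J * M1ᵀ = ((k1 : ℤ) * k1) • J by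
      rw [hM1J, Matrix.smul_mul, hJM1t, smul_smul]]
    rw [smul_add, smul_smul, smul_smul, smul_smul]
    rw [add_assoc, ← add_smul]
    congr 1
    · congr 1; ring
    · congr 1; ring
  constructor
  · rw [hQt, expand, hmid, hcross, smul_sub]
    have hcoef : ((k2 : ℤ) - l2) * l1 + (l2 : ℤ) * k1 * k1
        = (v : ℤ) * l1 * l2 + (l2 : ℤ) * ((k1 : ℤ) - l1) + (l1 : ℤ) * ((k2 : ℤ) - l2) := by
      linear_combination (l2 : ℤ) * e1
    rw [hcoef]
    ext i j
    simp [Matrix.add_apply, Matrix.smul_apply, Matrix.one_apply, hJdef]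
    by_cases hij : i = j <;> simp [hij] <;> ring
  · linear_combination (-(k2 : ℤ)^2 + ((k2 : ℤ) * ((k2 : ℤ) - 1) - ((v : ℤ) - 1) * l2)) * e1
      - (k1 : ℤ)^2 * e2 + hα
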